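/- arXiv:2402.15649 — 3 statements merged into one kernel-verified Lean document; each statement's English description precedes it below -/
import Mathlib

section
/- Let f be a polynomial in n variables of degree at most D and ℓ ∈ ℕ. For any vectors v₁,…,v_ℓ ∈ ℝⁿ, the iterated directional derivative satisfies ‖(1/ℓ!)·∂^ℓ f[v₁,…,v_ℓ]‖₁ ≤ binomial(D, ℓ)·‖f‖₁·‖v₁‖_∞ ⋯ ‖v_ℓ‖_∞. -/
open MvPolynomial

/-- The 1-norm of a real multivariate polynomial: the sum of the absolute
values of its coefficients. -/
noncomputable def norm1 {n : ℕ} (f : MvPolynomial (Fin n) ℝ) : ℝ :=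
  ∑ α ∈ f.support, |f.coeff α|

/-- The directional derivative `∂f[v] = Σₖ (∂f/∂Xₖ)·vₖ`. -/
noncomputable def dirDeriv {n : ℕ} (v : Fin n → ℝ) (f : MvPolynomial (Fin n) ℝ) :
    MvPolynomial (Fin n) ℝ :=
  ∑ k, MvPolynomial.C (v k) * MvPolynomial.pderiv k f

/-- The iterated directional derivative `∂^ℓ f[v₁,…,v_ℓ]`, applying the
directional derivatives successively. -/
noncomputable def itDeriv {n : ℕ} :
    MvPolynomial (Fin n) ℝ → List (Fin n → ℝ) → MvPolynomial (Fin n) ℝ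
  | f, [] => f
  | f, v :: vs => itDeriv (dirDeriv v f) vs

lemma norm1_nonneg {n : ℕ} (f : MvPolynomial (Fin n) ℝ) : 0 ≤ norm1 f :=
  Finset.sum_nonneg fun _ _ => abs_nonneg _

lemma norm1_eq_sum {n : ℕ} (f : MvPolynomial (Fin n) ℝ) {s : Finset (Fin n →₀ ℕ)}
    (hs : f.support ⊆ s) : norm1 f = ∑ α ∈ s, |f.coeff α| := by
  refine Finset.sum_subset hs fun x _ hx => ?_
  simp [MvPolynomial.notMem_support_iff.mp hx]

lemma norm1_add_le {n : ℕ} (f g : MvPolynomial (Fin n) ℝ) :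
    norm1 (f + g) ≤ norm1 f + norm1 g := by
  rw [norm1_eq_sum (f + g) (MvPolynomial.support_add),
    norm1_eq_sum f (Finset.subset_union_left (s₂ := g.support)),
    norm1_eq_sum g (Finset.subset_union_right (s₁ := f.support)), ← Finset.sum_add_distrib]
  exact Finset.sum_le_sum fun x _ => by simpa using abs_add_le (f.coeff x) (g.coeff x)

lemma norm1_sum_le {n : ℕ} {ι : Type*} (s : Finset ι) (g : ι → MvPolynomial (Fin n) ℝ) :
    norm1 (∑ i ∈ s, g i) ≤ ∑ i ∈ s, norm1 (g i) := by
  classical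
  induction s using Finset.cons_induction with
  | empty => simp [norm1]
  | cons a s ha ih =>
    rw [Finset.sum_cons, Finset.sum_cons]
    exact (norm1_add_le _ _).trans (by linarith)

lemma norm1_smul {n : ℕ} (c : ℝ) (f : MvPolynomial (Fin n) ℝ) :
    norm1 (c • f) = |c| * norm1 f := by
  rw [norm1_eq_sum (c • f) (MvPolynomial.support_smul), norm1, Finset.mul_sum]
  exact Finset.sum_congr rfl fun x _ => by simp [abs_mul]

lemma norm1_monomial_le {n : ℕ} (m : Fin n →₀ ℕ) (a : ℝ) :
    norm1 (MvPolynomial.monomial m a) ≤ |a| := by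
  by_cases h : a = 0
  · simp [h, norm1]
  · simp [norm1, MvPolynomial.support_monomial, h]

lemma pderiv_eq_sum {n : ℕ} (k : Fin n) (f : MvPolynomial (Fin n) ℝ) :
    MvPolynomial.pderiv k f =
      ∑ m ∈ f.support, MvPolynomial.monomial (m - Finsupp.single k 1) (f.coeff m * m k) := by
  conv_lhs => rw [f.as_sum]
  rw [map_sum]
  exact Finset.sum_congr rfl fun m _ => by rw [MvPolynomial.pderiv_monomial]

lemma sub_single_degree {n : ℕ} (m : Fin n →₀ ℕ) (k : Fin n) (h : 1 ≤ m k) :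
    ((m - Finsupp.single k 1).sum fun _ e => e) ≤ (m.sum fun _ e => e) - 1 := by
  rw [Finsupp.sum_fintype _ _ fun _ => rfl, Finsupp.sum_fintype _ _ fun _ => rfl,
    ← Finset.add_sum_erase _ _ (Finset.mem_univ k), ← Finset.add_sum_erase _ _ (Finset.mem_univ k)]
  have h1 : ∀ j ∈ Finset.univ.erase k, (m - Finsupp.single k 1 : Fin n →₀ ℕ) j = m j := by
    intro j hj
    rw [Finsupp.tsub_apply, Finsupp.single_apply, if_neg (Ne.symm (Finset.mem_erase.mp hj).1)]
    simp
  rw [Finset.sum_congr rfl h1]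
  have h2 : (m - Finsupp.single k 1 : Fin n →₀ ℕ) k = m k - 1 := by
    rw [Finsupp.tsub_apply, Finsupp.single_apply, if_pos rfl]
  have h3 : (Finset.univ.erase k).sum ⇑m = ∑ x ∈ Finset.univ.erase k, m x := rfl
  rw [h2]; omega

lemma totalDegree_dirDeriv_le {n : ℕ} (v : Fin n → ℝ) (f : MvPolynomial (Fin n) ℝ) (D : ℕ)
    (hD : f.totalDegree ≤ D) : (dirDeriv v f).totalDegree ≤ D - 1 := by
  refine (MvPolynomial.totalDegree_finset_sum _ _).trans (Finset.sup_le fun k _ => ?_)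
  refine le_trans ?_ (le_trans (?_ : (MvPolynomial.pderiv k f).totalDegree ≤ D - 1) le_rfl)
  · exact (MvPolynomial.totalDegree_mul _ _).trans (by simp [MvPolynomial.totalDegree_C])
  · rw [pderiv_eq_sum]
    refine (MvPolynomial.totalDegree_finset_sum _ _).trans (Finset.sup_le fun m hm => ?_)
    by_cases h : m k = 0
    · simp [h]
    · refine (MvPolynomial.totalDegree_monomial_le _ _).trans ?_
      have h4 := sub_single_degree m k (by omega)
      have hle := MvPolynomial.le_totalDegree hm
      have h5 : ((m - Finsupp.single k 1).sum fun _ => id) =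
          ((m - Finsupp.single k 1).sum fun _ e => e) := rfl
      omega

lemma norm1_pderiv_le {n : ℕ} (k : Fin n) (f : MvPolynomial (Fin n) ℝ) :
    norm1 (MvPolynomial.pderiv k f) ≤ ∑ m ∈ f.support, |f.coeff m| * (m k : ℝ) := by
  rw [pderiv_eq_sum]
  refine (norm1_sum_le _ _).trans (Finset.sum_le_sum fun m _ => ?_)
  refine (norm1_monomial_le _ _).trans (le_of_eq ?_)
  rw [abs_mul, Nat.abs_cast]

lemma norm1_dirDeriv_le {n : ℕ} (v : Fin n → ℝ) (f : MvPolynomial (Fin n) ℝ) (D : ℕ)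
    (hD : f.totalDegree ≤ D) : norm1 (dirDeriv v f) ≤ D * norm1 f * ‖v‖ := by
  calc norm1 (dirDeriv v f)
      ≤ ∑ k, norm1 (MvPolynomial.C (v k) * MvPolynomial.pderiv k f) := norm1_sum_le _ _
    _ = ∑ k, |v k| * norm1 (MvPolynomial.pderiv k f) := by
        refine Finset.sum_congr rfl fun k _ => ?_
        rw [← MvPolynomial.smul_eq_C_mul, norm1_smul]
    _ ≤ ∑ k, ‖v‖ * ∑ m ∈ f.support, |f.coeff m| * (m k : ℝ) := by
        refine Finset.sum_le_sum fun k _ => ?_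
        have h1 : |v k| ≤ ‖v‖ := by
          simpa [Real.norm_eq_abs] using norm_le_pi_norm v k
        have h2 := norm1_pderiv_le k f
        have h3 : (0:ℝ) ≤ ∑ m ∈ f.support, |f.coeff m| * (m k : ℝ) :=
          Finset.sum_nonneg fun m hm => mul_nonneg (abs_nonneg _) (Nat.cast_nonneg _)
        calc |v k| * norm1 (MvPolynomial.pderiv k f)
            ≤ |v k| * ∑ m ∈ f.support, |f.coeff m| * (m k : ℝ) :=
              mul_le_mul_of_nonneg_left h2 (abs_nonneg _)
          _ ≤ ‖v‖ * ∑ m ∈ f.support, |f.coeff m| * (m k : ℝ) :=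
              mul_le_mul_of_nonneg_right h1 h3
    _ = ‖v‖ * ∑ m ∈ f.support, |f.coeff m| * ∑ k, (m k : ℝ) := by
        rw [← Finset.mul_sum, Finset.sum_comm]
        congr 1
        exact Finset.sum_congr rfl fun m _ => by rw [Finset.mul_sum]
    _ ≤ ‖v‖ * ∑ m ∈ f.support, |f.coeff m| * (D : ℝ) := by
        refine mul_le_mul_of_nonneg_left (Finset.sum_le_sum fun m hm => ?_) (norm_nonneg v)
        refine mul_le_mul_of_nonneg_left ?_ (abs_nonneg _)
        have h1 : (m.sum fun _ e => e) ≤ D := (MvPolynomial.le_totalDegree hm).trans hD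
        rw [Finsupp.sum_fintype _ _ fun _ => rfl] at h1
        calc (∑ k, (m k : ℝ)) = ((∑ k, m k : ℕ) : ℝ) := by push_cast; ring
          _ ≤ (D : ℝ) := by exact_mod_cast h1
    _ = D * norm1 f * ‖v‖ := by
        rw [norm1, ← Finset.sum_mul]
        ring

lemma norm1_itDeriv_aux {n : ℕ} (vs : List (Fin n → ℝ)) :
    ∀ (D : ℕ) (f : MvPolynomial (Fin n) ℝ), f.totalDegree ≤ D →
      norm1 (itDeriv f vs) ≤
        (D.descFactorial vs.length : ℝ) * norm1 f * (vs.map fun v => ‖v‖).prod := by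
  induction vs with
  | nil => intro D f hD; simp [itDeriv]
  | cons v vs ih =>
    intro D f hD
    have h1 := ih (D - 1) (dirDeriv v f) (totalDegree_dirDeriv_le v f D hD)
    have h2 := norm1_dirDeriv_le v f D hD
    have hprod : (0:ℝ) ≤ (vs.map fun v => ‖v‖).prod := by
      refine List.prod_nonneg ?_
      intro x hx
      simp only [List.mem_map] at hx
      obtain ⟨w, _, rfl⟩ := hx
      exact norm_nonneg w
    have hdf : ((D.descFactorial (vs.length + 1) : ℕ) : ℝ) =
        (D : ℝ) * ((D - 1).descFactorial vs.length : ℕ) := by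
      cases D with
      | zero => simp
      | succ d => rw [Nat.succ_descFactorial_succ]; push_cast; simp
    have : itDeriv f (v :: vs) = itDeriv (dirDeriv v f) vs := rfl
    rw [this]
    calc norm1 (itDeriv (dirDeriv v f) vs)
        ≤ ((D - 1).descFactorial vs.length : ℝ) * norm1 (dirDeriv v f) *
            (vs.map fun v => ‖v‖).prod := h1
      _ ≤ ((D - 1).descFactorial vs.length : ℝ) * (D * norm1 f * ‖v‖) *
            (vs.map fun v => ‖v‖).prod :=
          mul_le_mul_of_nonneg_right
            (mul_le_mul_of_nonneg_left h2 (Nat.cast_nonneg _)) hprod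
      _ = (D.descFactorial (v :: vs).length : ℝ) * norm1 f *
            ((v :: vs).map fun v => ‖v‖).prod := by
          simp only [List.length_cons, List.map_cons, List.prod_cons, hdf]; ring

/-- If `f` has degree at most `D`, then
`‖(1/ℓ!)·∂^ℓ f[v₁,…,v_ℓ]‖₁ ≤ binom(D,ℓ)·‖f‖₁·‖v₁‖_∞⋯‖v_ℓ‖_∞`. -/
theorem norm1_itDeriv_le {n : ℕ} (D ℓ : ℕ) (f : MvPolynomial (Fin n) ℝ)
    (hD : f.totalDegree ≤ D) (vs : List (Fin n → ℝ)) (hlen : vs.length = ℓ) :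
    norm1 ((ℓ.factorial : ℝ)⁻¹ • itDeriv f vs) ≤
      (D.choose ℓ : ℝ) * norm1 f * (vs.map fun v => ‖v‖).prod := by
  have hfac : (0:ℝ) < (ℓ.factorial : ℝ) := by exact_mod_cast ℓ.factorial_pos
  have haux := norm1_itDeriv_aux vs D f hD
  rw [hlen] at haux
  have hkey : ((D.descFactorial ℓ : ℕ) : ℝ) = (ℓ.factorial : ℝ) * (D.choose ℓ : ℝ) := by
    exact_mod_cast congrArg (Nat.cast (R := ℝ)) (Nat.descFactorial_eq_factorial_mul_choose D ℓ)
  rw [norm1_smul, abs_of_pos (inv_pos.mpr hfac)]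
  calc (ℓ.factorial : ℝ)⁻¹ * norm1 (itDeriv f vs)
      ≤ (ℓ.factorial : ℝ)⁻¹ * ((D.descFactorial ℓ : ℝ) * norm1 f * (vs.map fun v => ‖v‖).prod) :=
        mul_le_mul_of_nonneg_left haux (inv_nonneg.mpr hfac.le)
    _ = (D.choose ℓ : ℝ) * norm1 f * (vs.map fun v => ‖v‖).prod := by
        rw [hkey]; field_simp
end

section
/- Let A, B ∈ ℝ^{q×n} with B surjective (as a linear map ℝⁿ → ℝ^q), and suppose ‖B†(A−B)‖ < 1 in operator norm, where B† = B*(BB*)^{-1} is the Moore–Penrose pseudoinverse. Then A is surjective and ‖A†B‖ ≤ 1/(1 − ‖B†(A−B)‖). -/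
open Matrix

/-- Euclidean norm of a vector. -/
noncomputable def euclNorm {m : ℕ} (v : Fin m → ℝ) : ℝ :=
  Real.sqrt (∑ i, v i ^ 2)

/-- The spectral (operator 2-)norm of a matrix. -/
noncomputable def opNorm2 {a b : ℕ} (M : Matrix (Fin a) (Fin b) ℝ) : ℝ :=
  sSup {r | ∃ v : Fin b → ℝ, euclNorm v ≤ 1 ∧ r = euclNorm (M.mulVec v)}

/-- The Moore–Penrose pseudoinverse `M† = M*(MM*)⁻¹` of a surjective matrix. -/
noncomputable def pinv {q n : ℕ} (M : Matrix (Fin q) (Fin n) ℝ) :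
    Matrix (Fin n) (Fin q) ℝ :=
  Mᵀ * (M * Mᵀ)⁻¹

lemma euclNorm_eq {m : ℕ} (v : Fin m → ℝ) :
    euclNorm v = ‖(WithLp.equiv 2 (Fin m → ℝ)).symm v‖ := by
  rw [EuclideanSpace.norm_eq]
  simp [euclNorm, Real.norm_eq_abs, sq_abs]

lemma euclNorm_nonneg {m : ℕ} (v : Fin m → ℝ) : 0 ≤ euclNorm v :=
  Real.sqrt_nonneg _

lemma euclNorm_add_le {m : ℕ} (v w : Fin m → ℝ) :
    euclNorm (v + w) ≤ euclNorm v + euclNorm w := by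
  simp only [euclNorm_eq, map_add]
  exact norm_add_le _ _

lemma dotProduct_le {m : ℕ} (v w : Fin m → ℝ) :
    v ⬝ᵥ w ≤ euclNorm v * euclNorm w := by
  have h := real_inner_le_norm ((WithLp.equiv 2 (Fin m → ℝ)).symm v)
    ((WithLp.equiv 2 (Fin m → ℝ)).symm w)
  rw [PiLp.inner_apply] at h
  simpa [euclNorm_eq, dotProduct, RCLike.inner_apply, mul_comm] using h

lemma euclNorm_sq {m : ℕ} (v : Fin m → ℝ) : euclNorm v ^ 2 = v ⬝ᵥ v := by
  have h := real_inner_self_eq_norm_sq ((WithLp.equiv 2 (Fin m → ℝ)).symm v)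
  rw [PiLp.inner_apply] at h
  rw [euclNorm_eq]
  rw [← h]
  simp [dotProduct, RCLike.inner_apply, sq]

noncomputable def clm {a b : ℕ} (M : Matrix (Fin a) (Fin b) ℝ) :
    EuclideanSpace ℝ (Fin b) →L[ℝ] EuclideanSpace ℝ (Fin a) :=
  LinearMap.toContinuousLinearMap (Matrix.toEuclideanLin M)

lemma opNorm2_eq {a b : ℕ} (M : Matrix (Fin a) (Fin b) ℝ) :
    opNorm2 M = ‖clm M‖ := by
  rw [← (clm M).sSup_unitClosedBall_eq_norm, opNorm2]
  congr 1
  ext r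
  constructor
  · rintro ⟨v, hv, rfl⟩
    refine ⟨(WithLp.equiv 2 (Fin b → ℝ)).symm v, ?_, ?_⟩
    · rw [Metric.mem_closedBall, dist_zero_right, ← euclNorm_eq]; exact hv
    · rw [euclNorm_eq]
      congr 1
  · rintro ⟨x, hx, rfl⟩
    refine ⟨WithLp.equiv 2 (Fin b → ℝ) x, ?_, ?_⟩
    · rw [euclNorm_eq]
      simpa using (Metric.mem_closedBall.1 hx)
    · rw [euclNorm_eq]
      congr 1

lemma opNorm2_nonneg {a b : ℕ} (M : Matrix (Fin a) (Fin b) ℝ) : 0 ≤ opNorm2 M := by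
  rw [opNorm2_eq]; exact norm_nonneg _

lemma le_opNorm2 {a b : ℕ} (M : Matrix (Fin a) (Fin b) ℝ) (v : Fin b → ℝ) :
    euclNorm (M.mulVec v) ≤ opNorm2 M * euclNorm v := by
  rw [opNorm2_eq, euclNorm_eq, euclNorm_eq]
  have : (WithLp.equiv 2 (Fin a → ℝ)).symm (M.mulVec v)
      = clm M ((WithLp.equiv 2 (Fin b → ℝ)).symm v) := by
    simp [clm]
  rw [this]
  exact (clm M).le_opNorm _

lemma opNorm2_le {a b : ℕ} (M : Matrix (Fin a) (Fin b) ℝ) (c : ℝ) (hc : 0 ≤ c)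
    (h : ∀ v, euclNorm (M.mulVec v) ≤ c * euclNorm v) : opNorm2 M ≤ c := by
  rw [opNorm2_eq]
  refine ContinuousLinearMap.opNorm_le_bound _ hc fun x => ?_
  have := h (WithLp.equiv 2 (Fin b → ℝ) x)
  simp only [euclNorm_eq, Equiv.symm_apply_apply] at this
  simpa [clm, Matrix.toEuclideanLin_apply] using this

lemma euclNorm_eq_zero {m : ℕ} {v : Fin m → ℝ} : euclNorm v = 0 ↔ v = 0 := by
  rw [euclNorm_eq, norm_eq_zero]
  simp

lemma euclNorm_neg {m : ℕ} (v : Fin m → ℝ) : euclNorm (-v) = euclNorm v := by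
  simp [euclNorm, neg_sq]

lemma isUnit_mul_transpose {q n : ℕ} (M : Matrix (Fin q) (Fin n) ℝ)
    (h : Function.Surjective M.mulVec) : IsUnit (M * Mᵀ) := by
  rw [← Matrix.mulVec_injective_iff_isUnit]
  have key : ∀ x : Fin q → ℝ, (M * Mᵀ) *ᵥ x = 0 → x = 0 := by
    intro x hx
    have hz : Mᵀ *ᵥ x = 0 := by
      have h1 : x ⬝ᵥ ((M * Mᵀ) *ᵥ x) = 0 := by rw [hx]; simp
      rw [← Matrix.mulVec_mulVec, Matrix.dotProduct_mulVec, ← Matrix.mulVec_transpose,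
        dotProduct_self_eq_zero] at h1
      exact h1
    have hxy : ∀ y : Fin n → ℝ, x ⬝ᵥ (M *ᵥ y) = 0 := by
      intro y
      rw [Matrix.dotProduct_mulVec, ← Matrix.mulVec_transpose, hz]
      simp
    obtain ⟨u, hu⟩ := h x
    have := hxy u
    rw [hu, dotProduct_self_eq_zero] at this
    exact this
  intro x y hxy
  have : (M * Mᵀ) *ᵥ (x - y) = 0 := by
    rw [Matrix.mulVec_sub, hxy, sub_self]
  exact sub_eq_zero.1 (key _ this)

lemma mul_pinv {q n : ℕ} (M : Matrix (Fin q) (Fin n) ℝ)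
    (h : Function.Surjective M.mulVec) : M * pinv M = 1 := by
  rw [pinv, ← Matrix.mul_assoc]
  exact Matrix.mul_nonsing_inv _ ((Matrix.isUnit_iff_isUnit_det _).1 (isUnit_mul_transpose M h))


/-- If `B` is surjective and `‖B†(A−B)‖ < 1`, then `A` is surjective and
`‖A†B‖ ≤ 1/(1 − ‖B†(A−B)‖)`. -/
theorem surjective_and_pinv_bound {q n : ℕ} (A B : Matrix (Fin q) (Fin n) ℝ)
    (hB : Function.Surjective B.mulVec)
    (hlt : opNorm2 (pinv B * (A - B)) < 1) :
    Function.Surjective A.mulVec ∧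
      opNorm2 (pinv A * B) ≤ 1 / (1 - opNorm2 (pinv B * (A - B))) := by
  set E := pinv B * (A - B) with hE
  set e := opNorm2 E with he
  have he0 : 0 ≤ e := opNorm2_nonneg E
  have hpos : 0 < 1 - e := by linarith
  -- A = B * (1 + E)
  have hA_eq : A = B * (1 + E) := by
    rw [hE, Matrix.mul_add, Matrix.mul_one, ← Matrix.mul_assoc, mul_pinv B hB, Matrix.one_mul]
    abel
  -- 1 + E is a unit
  have hUnit : IsUnit (1 + E) := by
    rw [← Matrix.mulVec_injective_iff_isUnit]
    have key : ∀ z : Fin n → ℝ, (1 + E) *ᵥ z = 0 → z = 0 := by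
      intro z hz
      rw [Matrix.add_mulVec, Matrix.one_mulVec, add_eq_zero_iff_eq_neg] at hz
      have h1 : euclNorm z ≤ e * euclNorm z := by
        calc euclNorm z = euclNorm (E *ᵥ z) := by
              conv_lhs => rw [hz]
              rw [euclNorm_neg]
        _ ≤ e * euclNorm z := le_opNorm2 E z
      have h2 : euclNorm z = 0 := by nlinarith [euclNorm_nonneg z]
      exact euclNorm_eq_zero.1 h2
    intro x y hxy
    have : (1 + E) *ᵥ (x - y) = 0 := by rw [Matrix.mulVec_sub, hxy, sub_self]
    exact sub_eq_zero.1 (key _ this)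
  have hdet : IsUnit (1 + E).det := (Matrix.isUnit_iff_isUnit_det _).1 hUnit
  set C := (1 + E)⁻¹ with hC
  have hCmul : (1 + E) * C = 1 := Matrix.mul_nonsing_inv _ hdet
  have hB_eq : B = A * C := by
    rw [hA_eq, Matrix.mul_assoc, hCmul, Matrix.mul_one]
  -- surjectivity of A
  have hAsurj : Function.Surjective A.mulVec := by
    intro y
    obtain ⟨x, hx⟩ := hB y
    refine ⟨C *ᵥ x, ?_⟩
    rw [Matrix.mulVec_mulVec, ← hB_eq, hx]
  refine ⟨hAsurj, ?_⟩
  -- projection P = pinv A * A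
  set P := pinv A * A with hP
  have hApinv : A * pinv A = 1 := mul_pinv A hAsurj
  have hAAT : IsUnit (A * Aᵀ).det :=
    (Matrix.isUnit_iff_isUnit_det _).1 (isUnit_mul_transpose A hAsurj)
  have hPT : Pᵀ = P := by
    rw [hP, pinv, Matrix.transpose_mul, Matrix.transpose_mul, Matrix.transpose_transpose,
      Matrix.transpose_nonsing_inv]
    rw [show (A * Aᵀ)ᵀ = A * Aᵀ by rw [Matrix.transpose_mul, Matrix.transpose_transpose]]
    rw [← Matrix.mul_assoc]
  have hPP : P * P = P := by
    rw [hP, Matrix.mul_assoc, ← Matrix.mul_assoc A (pinv A) A, hApinv, Matrix.one_mul]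
  -- norm of projection
  have hPnorm : ∀ w : Fin n → ℝ, euclNorm (P *ᵥ w) ≤ euclNorm w := by
    intro w
    set p := P *ᵥ w with hp
    have hpp : p ⬝ᵥ p = p ⬝ᵥ w := by
      nth_rewrite 2 [hp]
      rw [Matrix.dotProduct_mulVec, ← Matrix.mulVec_transpose, hPT, hp,
        Matrix.mulVec_mulVec, hPP]
    have hcs : p ⬝ᵥ w ≤ euclNorm p * euclNorm w := dotProduct_le p w
    have hsq : euclNorm p ^ 2 = p ⬝ᵥ p := euclNorm_sq p
    rcases eq_or_lt_of_le (euclNorm_nonneg p) with h0 | h0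
    · rw [← h0]; exact euclNorm_nonneg w
    · have : euclNorm p * euclNorm p ≤ euclNorm p * euclNorm w := by
        rw [← sq, hsq, hpp]; exact hcs
      exact le_of_mul_le_mul_left this h0
  -- norm of C
  have hCnorm : ∀ v : Fin n → ℝ, euclNorm (C *ᵥ v) ≤ (1 / (1 - e)) * euclNorm v := by
    intro v
    set w := C *ᵥ v with hw
    have hv : v = w + E *ᵥ w := by
      conv_lhs => rw [← Matrix.one_mulVec v, ← hCmul, ← Matrix.mulVec_mulVec,
        Matrix.add_mulVec, Matrix.one_mulVec]
    have h1 : euclNorm w ≤ euclNorm v + e * euclNorm w := by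
      have : w = v + -(E *ᵥ w) := by rw [hv]; ring
      calc euclNorm w = euclNorm (v + -(E *ᵥ w)) := by rw [← this]
      _ ≤ euclNorm v + euclNorm (-(E *ᵥ w)) := euclNorm_add_le _ _
      _ = euclNorm v + euclNorm (E *ᵥ w) := by rw [euclNorm_neg]
      _ ≤ euclNorm v + e * euclNorm w := by linarith [le_opNorm2 E w]
    rw [div_mul_eq_mul_div, one_mul, le_div_iff₀ hpos]
    nlinarith
  -- final bound
  have hfinal : pinv A * B = P * C := by
    rw [hB_eq, ← Matrix.mul_assoc, hP]
  rw [hfinal]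
  refine opNorm2_le _ _ (by positivity) fun v => ?_
  calc euclNorm ((P * C) *ᵥ v) = euclNorm (P *ᵥ (C *ᵥ v)) := by rw [Matrix.mulVec_mulVec]
  _ ≤ euclNorm (C *ᵥ v) := hPnorm _
  _ ≤ 1 / (1 - e) * euclNorm v := hCnorm v
end

section
/- Let x, y ∈ ℝⁿ and write ‖x‖_{h∞} := max{1, ‖x‖_∞}. Then ‖ (1, y)/‖y‖_{h∞} − (1, x)/‖x‖_{h∞} ‖_∞ ≤ 2‖y − x‖_∞ / ‖x‖_{h∞}, where (1, x) ∈ ℝ^{n+1} denotes the homogenization of x. -/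
lemma norm_fin_cons {n : ℕ} (a : ℝ) (v : Fin n → ℝ) :
    ‖(Fin.cons a v : Fin (n + 1) → ℝ)‖ = max ‖a‖ ‖v‖ := by
  apply le_antisymm
  · rw [pi_norm_le_iff_of_nonneg (le_max_of_le_left (norm_nonneg a))]
    intro i
    refine Fin.cases ?_ ?_ i
    · simpa using le_max_left ‖a‖ ‖v‖
    · intro j
      simpa using (norm_le_pi_norm v j).trans (le_max_right ‖a‖ ‖v‖)
  · refine max_le ?_ ?_
    · simpa using norm_le_pi_norm (Fin.cons a v : Fin (n + 1) → ℝ) 0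
    · rw [pi_norm_le_iff_of_nonneg (norm_nonneg _)]
      intro j
      simpa using norm_le_pi_norm (Fin.cons a v : Fin (n + 1) → ℝ) j.succ

/-- For `x, y ∈ ℝⁿ` with `‖x‖_{h∞} = max{1, ‖x‖_∞}`, the normalized
homogenizations satisfy
`‖(1,y)/‖y‖_{h∞} − (1,x)/‖x‖_{h∞}‖_∞ ≤ 2‖y−x‖_∞/‖x‖_{h∞}`.
The norm on `Fin k → ℝ` is the sup-norm. -/
theorem homogenization_lipschitz {n : ℕ} (x y : Fin n → ℝ) :
    ‖(max 1 ‖y‖)⁻¹ • (Fin.cons 1 y : Fin (n + 1) → ℝ) -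
        (max 1 ‖x‖)⁻¹ • (Fin.cons 1 x : Fin (n + 1) → ℝ)‖ ≤
      2 * ‖y - x‖ / max 1 ‖x‖ := by
  set a : ℝ := max 1 ‖x‖ with ha
  set b : ℝ := max 1 ‖y‖ with hb
  have ha1 : (1:ℝ) ≤ a := le_max_left _ _
  have hb1 : (1:ℝ) ≤ b := le_max_left _ _
  have ha0 : (0:ℝ) < a := lt_of_lt_of_le one_pos ha1
  have hb0 : (0:ℝ) < b := lt_of_lt_of_le one_pos hb1
  have hab : |a - b| ≤ ‖y - x‖ := by
    have h1 : |a - b| ≤ |‖x‖ - ‖y‖| := by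
      rw [ha, hb, max_comm 1 ‖x‖, max_comm 1 ‖y‖]
      exact abs_max_sub_max_le_abs _ _ _
    have h2 : |‖x‖ - ‖y‖| ≤ ‖x - y‖ := abs_norm_sub_norm_le x y
    rw [← norm_sub_rev] at h2
    exact h1.trans h2
  have key : b⁻¹ • (Fin.cons 1 y : Fin (n + 1) → ℝ) -
      a⁻¹ • (Fin.cons 1 x : Fin (n + 1) → ℝ) =
      a⁻¹ • ((Fin.cons 1 y : Fin (n + 1) → ℝ) - Fin.cons 1 x) +
      (b⁻¹ - a⁻¹) • (Fin.cons 1 y : Fin (n + 1) → ℝ) := by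
    module
  have hsub : (Fin.cons 1 y : Fin (n + 1) → ℝ) - Fin.cons 1 x =
      (Fin.cons 0 (y - x) : Fin (n + 1) → ℝ) := by
    funext i
    refine Fin.cases ?_ ?_ i <;> simp
  have hny : ‖(Fin.cons 1 y : Fin (n + 1) → ℝ)‖ = b := by
    rw [norm_fin_cons]; simp [hb]
  have hnsub : ‖(Fin.cons 1 y : Fin (n + 1) → ℝ) - Fin.cons 1 x‖ = ‖y - x‖ := by
    rw [hsub, norm_fin_cons]; simp [norm_nonneg]
  rw [key]
  calc ‖a⁻¹ • ((Fin.cons 1 y : Fin (n + 1) → ℝ) - Fin.cons 1 x) +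
        (b⁻¹ - a⁻¹) • (Fin.cons 1 y : Fin (n + 1) → ℝ)‖
      ≤ ‖a⁻¹ • ((Fin.cons 1 y : Fin (n + 1) → ℝ) - Fin.cons 1 x)‖ +
        ‖(b⁻¹ - a⁻¹) • (Fin.cons 1 y : Fin (n + 1) → ℝ)‖ := norm_add_le _ _
    _ = a⁻¹ * ‖y - x‖ + |b⁻¹ - a⁻¹| * b := by
        rw [norm_smul, norm_smul, hny, hnsub, Real.norm_eq_abs, Real.norm_eq_abs,
          abs_of_nonneg (inv_nonneg.2 ha0.le)]
    _ ≤ a⁻¹ * ‖y - x‖ + a⁻¹ * ‖y - x‖ := by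
        gcongr _ + ?_
        have h3 : |b⁻¹ - a⁻¹| * b = |a - b| / a := by
          rw [inv_sub_inv hb0.ne' ha0.ne', abs_div, abs_of_pos (mul_pos hb0 ha0)]
          field_simp
        rw [h3, div_le_iff₀ ha0]
        calc |a - b| ≤ ‖y - x‖ := hab
          _ = a⁻¹ * ‖y - x‖ * a := by field_simp
    _ = 2 * ‖y - x‖ / a := by ring
end
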